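/- Let X be a Hilbert space, A ∈ L(X), and T ∈ L(X) bijective. If T*A is weakly coercive, i.e., there exists a compact K ∈ L(X) with inf_{‖u‖=1} |⟨(T*A + K)u, u⟩| > 0, then A is Fredholm with index zero. -/

import Mathlib

open ContinuousLinearMap

/-- `T` is Fredholm of index zero: closed range, finite-dimensional kernel and
cokernel, and `dim ker = dim coker`. -/
def FredholmIdxZero {X : Type*} [NormedAddCommGroup X] [InnerProductSpace ℂ X]
    (T : X →L[ℂ] X) : Prop :=
  IsClosed ((LinearMap.range (T : X →ₗ[ℂ] X) : Submodule ℂ X) : Set X) ∧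
  FiniteDimensional ℂ (LinearMap.ker (T : X →ₗ[ℂ] X)) ∧
  FiniteDimensional ℂ (X ⧸ LinearMap.range (T : X →ₗ[ℂ] X)) ∧
  Module.finrank ℂ (LinearMap.ker (T : X →ₗ[ℂ] X)) =
    Module.finrank ℂ (X ⧸ LinearMap.range (T : X →ₗ[ℂ] X))


section AuxLemmas

set_option linter.unusedSectionVars false

variable {X : Type*} [NormedAddCommGroup X] [InnerProductSpace ℂ X] [CompleteSpace X]

variable {X : Type*} [NormedAddCommGroup X] [InnerProductSpace ℂ X] [CompleteSpace X]

lemma coercive_key (B : X →L[ℂ] X) {c : ℝ}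
    (h : ∀ u : X, ‖u‖ = 1 → c ≤ ‖(inner ℂ (B u) u : ℂ)‖) (u : X) :
    c * (‖u‖ * ‖u‖) ≤ ‖(inner ℂ (B u) u : ℂ)‖ := by
  rcases eq_or_ne u 0 with rfl | hu
  · simp
  · have hn : ‖u‖ ≠ 0 := norm_ne_zero_iff.mpr hu
    set v : X := ‖u‖⁻¹ • u with hv
    have hvn : ‖v‖ = 1 := by
      rw [hv, norm_smul, norm_inv, norm_norm, inv_mul_cancel₀ hn]
    have hBv : (inner ℂ (B v) v : ℂ) = (‖u‖⁻¹ : ℂ) * (‖u‖⁻¹ : ℂ) * inner ℂ (B u) u := by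
      rw [hv]
      have : B ((‖u‖⁻¹ : ℝ) • u) = (‖u‖⁻¹ : ℝ) • B u := map_smul_of_tower B _ u
      rw [this, RCLike.real_smul_eq_coe_smul (K := ℂ), RCLike.real_smul_eq_coe_smul (K := ℂ),
        inner_smul_left, inner_smul_right]
      rw [RCLike.conj_ofReal]
      push_cast
      ring_nf
      exact mul_comm _ _
    have h0 := h v hvn
    rw [hBv] at h0
    have h2 : c ≤ ‖u‖⁻¹ * ‖u‖⁻¹ * ‖(inner ℂ (B u) u : ℂ)‖ := by
      calc c ≤ ‖(‖u‖⁻¹ : ℂ) * (‖u‖⁻¹ : ℂ) * inner ℂ (B u) u‖ := h0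
        _ = ‖u‖⁻¹ * ‖u‖⁻¹ * ‖(inner ℂ (B u) u : ℂ)‖ := by
          simp [norm_mul, norm_inv, abs_of_nonneg (norm_nonneg u)]
    have hpos : 0 < ‖u‖ := norm_pos_iff.mpr hu
    calc c * (‖u‖ * ‖u‖) ≤ (‖u‖⁻¹ * ‖u‖⁻¹ * ‖(inner ℂ (B u) u : ℂ)‖) * (‖u‖ * ‖u‖) :=
          mul_le_mul_of_nonneg_right h2 (by positivity)
      _ = ‖(inner ℂ (B u) u : ℂ)‖ := by field_simp

lemma coercive_bijective (B : X →L[ℂ] X) {c : ℝ} (hc : 0 < c)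
    (h : ∀ u : X, ‖u‖ = 1 → c ≤ ‖(inner ℂ (B u) u : ℂ)‖) :
    Function.Bijective B := by
  have key := coercive_key B h
  have lower : ∀ u : X, c * ‖u‖ ≤ ‖B u‖ := by
    intro u
    rcases eq_or_ne u 0 with rfl | hu
    · simp
    · have hpos : 0 < ‖u‖ := norm_pos_iff.mpr hu
      have h1 : c * (‖u‖ * ‖u‖) ≤ ‖B u‖ * ‖u‖ :=
        (key u).trans (norm_inner_le_norm _ _)
      nlinarith
  have hinj : Function.Injective B := by
    intro x y hxy
    have hB0 : B (x - y) = 0 := by rw [map_sub, hxy, sub_self]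
    have h0 : c * ‖x - y‖ ≤ 0 := by simpa [hB0] using lower (x - y)
    have : ‖x - y‖ = 0 := by nlinarith [norm_nonneg (x - y)]
    rwa [norm_sub_eq_zero_iff] at this
  refine ⟨hinj, ?_⟩
  -- closed range
  have hanti : AntilipschitzWith (⟨c, hc.le⟩ : NNReal)⁻¹ B := by
    refine AddMonoidHomClass.antilipschitz_of_bound B fun x => ?_
    have hlx := lower x
    show ‖x‖ ≤ c⁻¹ * ‖B x‖
    rw [inv_mul_eq_div, le_div_iff₀ hc]
    linarith
  have hclosed : IsClosed (Set.range B) := hanti.isClosed_range B.uniformContinuous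
  set R : Submodule ℂ X := LinearMap.range (B : X →ₗ[ℂ] X) with hR
  have hRclosed : IsClosed (R : Set X) := by
    have : (R : Set X) = Set.range B := by
      ext x; simp [hR, LinearMap.mem_range, Set.mem_range]
    rw [this]; exact hclosed
  haveI : CompleteSpace R := hRclosed.completeSpace_coe
  have hperp : Rᗮ = ⊥ := by
    rw [Submodule.eq_bot_iff]
    intro z hz
    have hBz : B z ∈ R := LinearMap.mem_range_self _ z
    have hz0 : (inner ℂ (B z) z : ℂ) = 0 := (Submodule.mem_orthogonal R z).mp hz _ hBz
    have := key z
    rw [hz0] at this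
    simp only [norm_zero] at this
    by_contra hz'
    have hzpos : 0 < ‖z‖ := norm_pos_iff.mpr hz'
    nlinarith [mul_pos hc (mul_pos hzpos hzpos)]
  have hRtop : R = ⊤ := (Submodule.orthogonal_eq_bot_iff).mp hperp
  intro y
  have : y ∈ R := hRtop ▸ Submodule.mem_top
  obtain ⟨x, hx⟩ := this
  exact ⟨x, hx⟩


lemma adjoint_range_finite (F : X →L[ℂ] X)
    (hF : FiniteDimensional ℂ (LinearMap.range (F : X →ₗ[ℂ] X))) :
    FiniteDimensional ℂ (LinearMap.range ((adjoint F : X →L[ℂ] X) : X →ₗ[ℂ] X)) := by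
  set V : Submodule ℂ X := LinearMap.range (F : X →ₗ[ℂ] X) with hV
  haveI : FiniteDimensional ℂ V := hF
  have hVclosed : IsClosed (V : Set X) := Submodule.closed_of_finiteDimensional V
  haveI : CompleteSpace V := hVclosed.completeSpace_coe
  have hle : LinearMap.range ((adjoint F : X →L[ℂ] X) : X →ₗ[ℂ] X) ≤
      V.map ((adjoint F : X →L[ℂ] X) : X →ₗ[ℂ] X) := by
    rintro _ ⟨y, rfl⟩
    have hdec : (y : X) = ↑(V.orthogonalProjectionOnto y) + (y - ↑(V.orthogonalProjectionOnto y)) := by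
      abel
    have hperp : y - ↑(V.orthogonalProjectionOnto y) ∈ Vᗮ :=
      Submodule.sub_starProjection_mem_orthogonal y
    have hzero : adjoint F (y - ↑(V.orthogonalProjectionOnto y)) = 0 := by
      have hinner : ∀ x : X, (inner ℂ (adjoint F (y - ↑(V.orthogonalProjectionOnto y))) x : ℂ) = 0 := by
        intro x
        rw [adjoint_inner_left]
        exact inner_eq_zero_symm.mp ((Submodule.mem_orthogonal V _).mp hperp _ (LinearMap.mem_range_self _ x))
      have := hinner (adjoint F (y - ↑(V.orthogonalProjectionOnto y)))
      rwa [inner_self_eq_zero] at this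
    refine ⟨↑(V.orthogonalProjectionOnto y), (V.orthogonalProjectionOnto y).2, ?_⟩
    calc adjoint F ↑(V.orthogonalProjectionOnto y)
        = adjoint F ↑(V.orthogonalProjectionOnto y) + adjoint F (y - ↑(V.orthogonalProjectionOnto y)) := by
          rw [hzero, add_zero]
      _ = adjoint F y := by rw [← map_add]; congr 1; abel
  exact Submodule.finiteDimensional_of_le hle


lemma exists_finiteRank_approx (C : X →L[ℂ] X) (hC : IsCompactOperator ⇑C) :
    ∃ F D : X →L[ℂ] X, C = F + D ∧
      FiniteDimensional ℂ (LinearMap.range (F : X →ₗ[ℂ] X)) ∧ ‖D‖ < 1 := by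
  classical
  have hcpt : IsCompact (closure (⇑C '' Metric.closedBall 0 1)) := by
    have := hC.isCompact_closure_image_closedBall (f := (C : X →ₗ[ℂ] X)) 1
    exact this
  have htb : TotallyBounded (⇑C '' Metric.closedBall 0 1) :=
    (hcpt.totallyBounded).subset subset_closure
  obtain ⟨t, htfin, htcov⟩ := (Metric.totallyBounded_iff.mp htb) (1/2) (by norm_num)
  set V₀ : Submodule ℂ X := Submodule.span ℂ t with hV₀
  haveI : FiniteDimensional ℂ V₀ := FiniteDimensional.span_of_finite ℂ htfin
  have hVclosed : IsClosed (V₀ : Set X) := Submodule.closed_of_finiteDimensional V₀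
  haveI : CompleteSpace V₀ := hVclosed.completeSpace_coe
  set Pr : X →L[ℂ] X := V₀.subtypeL ∘L V₀.orthogonalProjectionOnto with hPr
  set F : X →L[ℂ] X := Pr ∘L C with hF
  set D : X →L[ℂ] X := C - F with hD
  have hmin : ∀ (w : X) (y : X), y ∈ V₀ → ‖w - Pr w‖ ≤ ‖w - y‖ := by
    intro w y hy
    have h1 : ‖w - ↑(V₀.orthogonalProjectionOnto w)‖ = ⨅ v : V₀, ‖w - ↑v‖ :=
      Submodule.starProjection_minimal w
    have h2 : (⨅ v : V₀, ‖w - ↑v‖) ≤ ‖w - y‖ := by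
      have : BddBelow (Set.range fun v : V₀ => ‖w - ↑v‖) :=
        ⟨0, by rintro _ ⟨v, rfl⟩; exact norm_nonneg _⟩
      exact ciInf_le this ⟨y, hy⟩
    calc ‖w - Pr w‖ = ‖w - ↑(V₀.orthogonalProjectionOnto w)‖ := rfl
      _ = ⨅ v : V₀, ‖w - ↑v‖ := h1
      _ ≤ ‖w - y‖ := h2
  have hDball : ∀ u : X, ‖u‖ ≤ 1 → ‖D u‖ ≤ 1/2 := by
    intro u hu
    have hCu : C u ∈ ⇑C '' Metric.closedBall 0 1 :=
      ⟨u, by simpa [Metric.mem_closedBall, dist_zero_right] using hu, rfl⟩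
    obtain ⟨y, hyt, hy⟩ := by
      have := htcov hCu
      simpa using this
    have hyV : y ∈ V₀ := Submodule.subset_span hyt
    have hDu : D u = C u - Pr (C u) := by
      simp [hD, hF, sub_apply, comp_apply]
    rw [hDu]
    calc ‖C u - Pr (C u)‖ ≤ ‖C u - y‖ := hmin (C u) y hyV
      _ ≤ 1/2 := by
        rw [← dist_eq_norm]
        exact le_of_lt (by simpa [Metric.mem_ball, dist_comm] using hy)
  have hDnorm : ‖D‖ ≤ 1/2 := by
    apply opNorm_le_bound D (by norm_num)
    intro x
    rcases eq_or_ne x 0 with rfl | hx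
    · simp
    · have hn : ‖x‖ ≠ 0 := norm_ne_zero_iff.mpr hx
      have hpos : 0 < ‖x‖ := norm_pos_iff.mpr hx
      set u : X := ‖x‖⁻¹ • x with hu
      have hun : ‖u‖ ≤ 1 := by
        rw [hu, norm_smul, norm_inv, norm_norm, inv_mul_cancel₀ hn]
      have hDx : D x = ‖x‖ • D u := by
        rw [hu, map_smul_of_tower, smul_smul, mul_inv_cancel₀ hn, one_smul]
      rw [hDx, norm_smul, norm_norm]
      calc ‖x‖ * ‖D u‖ ≤ ‖x‖ * (1/2) := by
            exact mul_le_mul_of_nonneg_left (hDball u hun) (norm_nonneg x)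
        _ = 1/2 * ‖x‖ := by ring
  refine ⟨F, D, by rw [hD]; abel, ?_, by linarith⟩
  have hrange : LinearMap.range (F : X →ₗ[ℂ] X) ≤ V₀ := by
    rintro _ ⟨x, rfl⟩
    exact (V₀.orthogonalProjectionOnto (C x)).2
  exact Submodule.finiteDimensional_of_le hrange

lemma fredholm_one_sub_finiteRank (G : X →L[ℂ] X)
    (hG : FiniteDimensional ℂ (LinearMap.range (G : X →ₗ[ℂ] X))) :
    FredholmIdxZero (1 - G) := by
  classical
  set L : X →L[ℂ] X := 1 - G with hLdef
  have hLapp : ∀ x : X, L x = x - G x := fun x => rfl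
  haveI hGadj := adjoint_range_finite G hG
  set V : Submodule ℂ X :=
    LinearMap.range (G : X →ₗ[ℂ] X) ⊔
      LinearMap.range ((adjoint G : X →L[ℂ] X) : X →ₗ[ℂ] X) with hVdef
  haveI : FiniteDimensional ℂ V := by
    haveI := hG
    exact Submodule.finiteDimensional_sup _ _
  have hVclosed : IsClosed (V : Set X) := Submodule.closed_of_finiteDimensional V
  haveI : CompleteSpace V := hVclosed.completeSpace_coe
  have hGV : ∀ x : X, G x ∈ V := fun x =>
    Submodule.mem_sup_left (LinearMap.mem_range_self _ x)
  have hGperp : ∀ z ∈ Vᗮ, G z = 0 := by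
    intro z hz
    have hmem : adjoint G (G z) ∈ V :=
      Submodule.mem_sup_right (LinearMap.mem_range_self _ (G z))
    have h0 : (inner ℂ (adjoint G (G z)) z : ℂ) = 0 :=
      (Submodule.mem_orthogonal V z).mp hz _ hmem
    rw [adjoint_inner_left, inner_self_eq_zero] at h0
    exact h0
  have hLV : ∀ v ∈ V, L v ∈ V := by
    intro v hv
    rw [hLapp]
    exact Submodule.sub_mem V hv (hGV v)
  set M : V →ₗ[ℂ] V := ((L : X →ₗ[ℂ] X)).restrict hLV with hMdef
  have hMapp : ∀ v : V, (M v : X) = L v := fun v => rfl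
  set P := V.orthogonalProjectionOnto with hPdef
  have hPperp : ∀ x : X, x - ↑(P x) ∈ Vᗮ := fun x =>
    Submodule.sub_starProjection_mem_orthogonal x
  have hLperp : ∀ z ∈ Vᗮ, L z = z := by
    intro z hz; rw [hLapp, hGperp z hz, sub_zero]
  -- kernel
  have hker : LinearMap.ker (L : X →ₗ[ℂ] X) = Submodule.map V.subtype (LinearMap.ker M) := by
    ext x
    constructor
    · intro hx
      have hx0 : L x = 0 := hx
      have hxV : x ∈ V := by
        have : x = G x := by rw [hLapp] at hx0; linear_combination (norm := abel) hx0
        rw [this]; exact hGV x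
      refine ⟨⟨x, hxV⟩, ?_, rfl⟩
      have : (M ⟨x, hxV⟩ : X) = 0 := by rw [hMapp]; exact hx0
      exact Subtype.ext this
    · rintro ⟨y, hky, rfl⟩
      have hky' : M y = 0 := hky
      show L ↑y = 0
      rw [← hMapp, hky']
      rfl
  -- range
  set W : Submodule ℂ X := Submodule.map V.subtype (LinearMap.range M) with hWdef
  haveI : FiniteDimensional ℂ W := by
    infer_instance
  have hWV : W ≤ V := by
    rintro _ ⟨w, -, rfl⟩; exact w.2
  have hrange : LinearMap.range (L : X →ₗ[ℂ] X) = W ⊔ Vᗮ := by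
    apply le_antisymm
    · rintro _ ⟨x, rfl⟩
      have hdec : (L : X →ₗ[ℂ] X) x = (M (P x) : X) + (x - ↑(P x)) := by
        have h1 : L (x - ↑(P x)) = x - ↑(P x) := hLperp _ (hPperp x)
        have : L x = L ↑(P x) + L (x - ↑(P x)) := by rw [← map_add]; congr 1; abel
        rw [hMapp]
        show L x = L ↑(P x) + (x - ↑(P x))
        rw [this, h1]
      rw [hdec]
      exact Submodule.add_mem_sup
        (Submodule.mem_map_of_mem (LinearMap.mem_range_self M (P x))) (hPperp x)
    · refine sup_le ?_ ?_
      · rintro _ ⟨y, hy, rfl⟩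
        obtain ⟨u, rfl⟩ := hy
        exact ⟨↑u, (hMapp u).symm⟩
      · intro z hz
        exact ⟨z, hLperp z hz⟩
  -- description of W ⊔ Vᗮ as a preimage
  have hset : ((W ⊔ Vᗮ : Submodule ℂ X) : Set X) = (fun x => (↑(P x) : X)) ⁻¹' (W : Set X) := by
    ext x
    simp only [Set.mem_preimage, SetLike.mem_coe]
    constructor
    · intro hx
      obtain ⟨w, hw, z, hz, rfl⟩ := Submodule.mem_sup.mp hx
      have hPw : (↑(P w) : X) = w := Submodule.starProjection_eq_self_iff (K := V) |>.mpr (hWV hw)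
      have hPz : P z = 0 := Submodule.orthogonalProjectionOnto_apply_of_mem_orthogonal hz
      have : (↑(P (w + z)) : X) = w := by
        rw [map_add, hPz, add_zero, hPw]
      rw [this]; exact hw
    · intro hx
      exact Submodule.mem_sup.mpr ⟨↑(P x), hx, x - ↑(P x), hPperp x, by abel⟩
  have hclosedRange : IsClosed ((LinearMap.range (L : X →ₗ[ℂ] X) : Submodule ℂ X) : Set X) := by
    rw [hrange, hset]
    exact IsClosed.preimage (continuous_subtype_val.comp P.continuous)
      (Submodule.closed_of_finiteDimensional W)
  -- kernel finiteness and finrank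
  haveI hkerfin : FiniteDimensional ℂ (LinearMap.ker (L : X →ₗ[ℂ] X)) := by
    rw [hker]; infer_instance
  have hkerrank : Module.finrank ℂ (LinearMap.ker (L : X →ₗ[ℂ] X)) =
      Module.finrank ℂ (LinearMap.ker M) := by
    rw [hker]; exact Submodule.finrank_map_subtype_eq V _
  -- cokernel
  set R : Submodule ℂ X := LinearMap.range (L : X →ₗ[ℂ] X) with hRdef
  have hVperpR : Vᗮ ≤ R := by rw [hrange]; exact le_sup_right
  set φ : V →ₗ[ℂ] X ⧸ R := R.mkQ.comp V.subtype with hφdef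
  have hsurj : Function.Surjective φ := by
    intro q
    obtain ⟨x, rfl⟩ := R.mkQ_surjective q
    refine ⟨P x, ?_⟩
    show R.mkQ ↑(P x) = R.mkQ x
    rw [Submodule.mkQ_apply, Submodule.mkQ_apply, Submodule.Quotient.eq]
    have : (↑(P x) : X) - x = -(x - ↑(P x)) := by abel
    rw [this]
    exact Submodule.neg_mem R (hVperpR (hPperp x))
  have hkerφ : LinearMap.ker φ = LinearMap.range M := by
    ext v
    rw [LinearMap.mem_ker]
    have happ : φ v = R.mkQ ↑v := rfl
    rw [happ, Submodule.mkQ_apply, Submodule.Quotient.mk_eq_zero]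
    constructor
    · intro hvR
      have hvset : (↑v : X) ∈ ((W ⊔ Vᗮ : Submodule ℂ X) : Set X) := by
        rw [← hrange]; exact hvR
      rw [hset] at hvset
      have hPv : P ↑v = v := by
        apply Subtype.ext
        exact Submodule.starProjection_eq_self_iff (K := V) |>.mpr v.2
      rw [Set.mem_preimage, hPv] at hvset
      obtain ⟨u, hu, huv⟩ := hvset
      have : u = v := Subtype.ext huv
      rw [← this]; exact hu
    · rintro ⟨u, rfl⟩
      have : (↑(M u) : X) = L ↑u := hMapp u
      rw [this]
      exact LinearMap.mem_range_self _ _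
  have e2 : (V ⧸ LinearMap.ker φ) ≃ₗ[ℂ] (X ⧸ R) := φ.quotKerEquivOfSurjective hsurj
  haveI hq1 : FiniteDimensional ℂ (V ⧸ LinearMap.ker φ) := inferInstance
  haveI hcokfin : FiniteDimensional ℂ (X ⧸ R) := Module.Finite.equiv e2
  have hcokrank : Module.finrank ℂ (X ⧸ R) = Module.finrank ℂ (V ⧸ LinearMap.range M) := by
    rw [← e2.finrank_eq, hkerφ]
  -- index zero
  have h1 : Module.finrank ℂ (LinearMap.range M) + Module.finrank ℂ (LinearMap.ker M) =
      Module.finrank ℂ V := LinearMap.finrank_range_add_finrank_ker M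
  have h2 : Module.finrank ℂ (V ⧸ LinearMap.range M) +
      Module.finrank ℂ (LinearMap.range M) = Module.finrank ℂ V :=
    Submodule.finrank_quotient_add_finrank _
  exact ⟨hclosedRange, hkerfin, hcokfin, by rw [hkerrank, hcokrank]; omega⟩

lemma fredholm_comp_bijective (S M : X →L[ℂ] X) (hS : Function.Bijective S)
    (hM : FredholmIdxZero M) : FredholmIdxZero (S ∘L M) := by
  obtain ⟨hMclosed, hMker, hMcok, hMrank⟩ := hM
  set ES : X ≃L[ℂ] X := ContinuousLinearEquiv.ofBijective S
    (LinearMap.ker_eq_bot.mpr hS.1) (LinearMap.range_eq_top.mpr hS.2) with hES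
  have hcoe : ⇑ES = ⇑S := ContinuousLinearEquiv.coeFn_ofBijective _ _ _
  have hcoeL : (ES.toLinearEquiv : X →ₗ[ℂ] X) = (S : X →ₗ[ℂ] X) := by
    apply LinearMap.ext; intro x
    show ES x = S x
    rw [hcoe]
  have hcomp : ((S ∘L M : X →L[ℂ] X) : X →ₗ[ℂ] X) =
      (S : X →ₗ[ℂ] X).comp (M : X →ₗ[ℂ] X) := rfl
  have hker : LinearMap.ker ((S ∘L M : X →L[ℂ] X) : X →ₗ[ℂ] X) =
      LinearMap.ker (M : X →ₗ[ℂ] X) := by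
    rw [hcomp, LinearMap.ker_comp, LinearMap.ker_eq_bot.mpr hS.1, Submodule.comap_bot]
  have hrange : LinearMap.range ((S ∘L M : X →L[ℂ] X) : X →ₗ[ℂ] X) =
      Submodule.map (S : X →ₗ[ℂ] X) (LinearMap.range (M : X →ₗ[ℂ] X)) := by
    rw [hcomp, LinearMap.range_comp]
  refine ⟨?_, ?_, ?_, ?_⟩
  · rw [hrange]
    have : (Submodule.map (S : X →ₗ[ℂ] X) (LinearMap.range (M : X →ₗ[ℂ] X)) : Set X) =
        ⇑ES '' (LinearMap.range (M : X →ₗ[ℂ] X) : Set X) := by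
      rw [hcoe]; rfl
    rw [this]
    exact (ES.toHomeomorph.isClosedMap) _ hMclosed
  · rw [hker]; exact hMker
  · rw [hrange]
    have e : (X ⧸ LinearMap.range (M : X →ₗ[ℂ] X)) ≃ₗ[ℂ]
        (X ⧸ Submodule.map (S : X →ₗ[ℂ] X) (LinearMap.range (M : X →ₗ[ℂ] X))) :=
      Submodule.Quotient.equiv _ _ ES.toLinearEquiv (by
        ext x
        constructor
        · rintro ⟨y, hy, rfl⟩; exact ⟨y, hy, congrFun hcoe y⟩
        · rintro ⟨y, hy, rfl⟩; exact ⟨y, hy, (congrFun hcoe y).symm⟩)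
    exact Module.Finite.equiv e
  · rw [hker, hrange]
    have e : (X ⧸ LinearMap.range (M : X →ₗ[ℂ] X)) ≃ₗ[ℂ]
        (X ⧸ Submodule.map (S : X →ₗ[ℂ] X) (LinearMap.range (M : X →ₗ[ℂ] X))) :=
      Submodule.Quotient.equiv _ _ ES.toLinearEquiv (by
        ext x
        constructor
        · rintro ⟨y, hy, rfl⟩; exact ⟨y, hy, congrFun hcoe y⟩
        · rintro ⟨y, hy, rfl⟩; exact ⟨y, hy, (congrFun hcoe y).symm⟩)
    rw [hMrank]
    exact e.finrank_eq

end AuxLemmas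

/-- If `T` is bijective and `T*A` is weakly coercive (coercive up to a compact
perturbation), then `A` is Fredholm of index zero. -/
theorem stmt2 {X : Type*} [NormedAddCommGroup X] [InnerProductSpace ℂ X] [CompleteSpace X]
    (A T : X →L[ℂ] X) (hT : Function.Bijective T)
    (h : ∃ K : X →L[ℂ] X, IsCompactOperator (⇑K) ∧
      ∃ c > (0 : ℝ), ∀ u : X, ‖u‖ = 1 →
        c ≤ ‖(inner ℂ (((ContinuousLinearMap.adjoint T) ∘L A + K) u) u : ℂ)‖) :
    FredholmIdxZero A := by
  classical
  obtain ⟨K, hK, c, hc, hcoer⟩ := h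
  set B : X →L[ℂ] X := (adjoint T) ∘L A + K with hBdef
  have hB : Function.Bijective B := coercive_bijective B hc hcoer
  -- invertibility of adjoint T
  set E : X ≃L[ℂ] X := ContinuousLinearEquiv.ofBijective T
    (LinearMap.ker_eq_bot.mpr hT.1) (LinearMap.range_eq_top.mpr hT.2) with hE
  have hEcoe : ⇑E = ⇑T := ContinuousLinearEquiv.coeFn_ofBijective _ _ _
  set T' : X →L[ℂ] X := (E.symm : X →L[ℂ] X) with hT'
  have hT'T : T' ∘L T = 1 := by
    ext x
    show E.symm (T x) = x
    rw [← hEcoe]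
    exact E.symm_apply_apply x
  have hTT' : T ∘L T' = 1 := by
    ext x
    show T (E.symm x) = x
    rw [← hEcoe]
    exact E.apply_symm_apply x
  have h1 : (adjoint T) ∘L (adjoint T') = 1 := by
    rw [← adjoint_comp, hT'T]
    rw [ContinuousLinearMap.one_def, adjoint_id]
  have h2 : (adjoint T') ∘L (adjoint T) = 1 := by
    rw [← adjoint_comp, hTT']
    rw [ContinuousLinearMap.one_def, adjoint_id]
  have hadjbij : Function.Bijective ⇑(adjoint T') := by
    constructor
    · intro x y hxy
      have hx : adjoint T (adjoint T' x) = adjoint T (adjoint T' y) := by rw [hxy]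
      rwa [← comp_apply, ← comp_apply, h1, ContinuousLinearMap.one_apply, ContinuousLinearMap.one_apply] at hx
    · intro y
      exact ⟨adjoint T y, by rw [← comp_apply, h2, ContinuousLinearMap.one_apply]⟩
  -- invert B
  set BE : X ≃L[ℂ] X := ContinuousLinearEquiv.ofBijective B
    (LinearMap.ker_eq_bot.mpr hB.1) (LinearMap.range_eq_top.mpr hB.2) with hBE
  have hBEcoe : ⇑BE = ⇑B := ContinuousLinearEquiv.coeFn_ofBijective _ _ _
  set C : X →L[ℂ] X := (BE.symm : X →L[ℂ] X) ∘L K with hC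
  have hCcompact : IsCompactOperator ⇑C := by
    have : IsCompactOperator ((⇑(BE.symm : X →L[ℂ] X)) ∘ ⇑K) :=
      hK.continuous_comp (BE.symm : X →L[ℂ] X).continuous
    exact this
  obtain ⟨F, D, hCFD, hFfin, hDnorm⟩ := exists_finiteRank_approx C hCcompact
  set u : (X →L[ℂ] X)ˣ := Units.oneSub D hDnorm with hu
  have huval : (↑u : X →L[ℂ] X) = 1 - D := rfl
  set G : X →L[ℂ] X := (↑u⁻¹ : X →L[ℂ] X) ∘L F with hG
  have hGfin : FiniteDimensional ℂ (LinearMap.range (G : X →ₗ[ℂ] X)) := by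
    have hle : LinearMap.range (G : X →ₗ[ℂ] X) ≤
        Submodule.map ((↑u⁻¹ : X →L[ℂ] X) : X →ₗ[ℂ] X)
          (LinearMap.range (F : X →ₗ[ℂ] X)) := by
      rintro _ ⟨x, rfl⟩
      exact ⟨F x, LinearMap.mem_range_self _ x, rfl⟩
    haveI := hFfin
    exact Submodule.finiteDimensional_of_le hle
  -- factorization
  set S : X →L[ℂ] X := (adjoint T') ∘L (B ∘L (1 - D)) with hS
  have hSbij : Function.Bijective ⇑S := by
    have h1mD : Function.Bijective ⇑(1 - D : X →L[ℂ] X) := by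
      constructor
      · intro x y hxy
        have : (↑u⁻¹ : X →L[ℂ] X) ((1 - D) x) = (↑u⁻¹ : X →L[ℂ] X) ((1 - D) y) := by rw [hxy]
        rwa [← comp_apply, ← comp_apply, ← mul_def, ← huval, u.inv_mul, ContinuousLinearMap.one_apply, ContinuousLinearMap.one_apply]
          at this
      · intro y
        refine ⟨(↑u⁻¹ : X →L[ℂ] X) y, ?_⟩
        rw [← comp_apply, ← mul_def, ← huval, u.mul_inv, ContinuousLinearMap.one_apply]
    have : ⇑S = ⇑(adjoint T') ∘ (⇑B ∘ ⇑(1 - D : X →L[ℂ] X)) := rfl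
    rw [this]
    exact hadjbij.comp (hB.comp h1mD)
  have hAeq : A = S ∘L (1 - G) := by
    ext x
    have e1 : (1 - D : X →L[ℂ] X) ((1 - G) x) = x - C x := by
      have : (1 - D : X →L[ℂ] X) ((1 - G) x) = ((1 - D) ∘L (1 - G)) x := rfl
      rw [this]
      have hfact : (1 - D : X →L[ℂ] X) ∘L (1 - G) = 1 - D - F := by
        have : (1 - D : X →L[ℂ] X) ∘L (1 - G) = (↑u : X →L[ℂ] X) * (1 - (↑u⁻¹ : X →L[ℂ] X) * F) := by
          rw [huval]; rfl
        rw [this, mul_sub, ← mul_assoc, u.mul_inv, one_mul, mul_one, huval]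
      rw [hfact, hCFD]
      simp only [sub_apply, add_apply, ContinuousLinearMap.one_apply]
      abel
    have e2 : B (x - C x) = adjoint T (A x) := by
      have hBC : B (C x) = K x := by
        have : C x = BE.symm (K x) := rfl
        rw [this, ← hBEcoe]
        exact BE.apply_symm_apply (K x)
      rw [map_sub, hBC, hBdef]
      simp only [add_apply, comp_apply]
      abel
    have e3 : adjoint T' (adjoint T (A x)) = A x := by
      rw [← comp_apply, h2, ContinuousLinearMap.one_apply]
    show A x = S ((1 - G) x)
    rw [hS]
    simp only [comp_apply]
    rw [e1, e2, e3]
  rw [hAeq]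
  exact fredholm_comp_bijective _ _ hSbij (fredholm_one_sub_finiteRank G hGfin)
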